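/- Let p ∈ [max{1, 1/q}, ∞) and assume that sup_{M∈ℕ} sup_{t∈[0,T)} ‖U(O^M_t) + R(O^M_t)‖_{L^{pq}(P;ℝ)} < ∞. Then sup_{M∈ℕ} sup_{t∈[0,T)} ‖F(Y^M_t)‖_{L^p(P;H)} < ∞. (Corollary 5.3 of the paper: uniform L^p bound for the nonlinearity evaluated along the approximations.) -/

import Mathlib

open MeasureTheory Set
open scoped ENNReal

/-- `⌊t⌋_h = max({0, h, −h, 2h, −2h, …} ∩ (−∞, t])` for `h > 0`. -/
noncomputable def hfloor (h t : ℝ) : ℝ := h * (⌊t / h⌋ : ℝ)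

lemma hfloor_le {h : ℝ} (hh : 0 < h) (s : ℝ) : hfloor h s ≤ s := by
  have h1 : (⌊s / h⌋ : ℝ) ≤ s / h := Int.floor_le _
  have := mul_le_mul_of_nonneg_left h1 hh.le
  simpa [hfloor, mul_div_cancel₀, hh.ne'] using this

lemma hfloor_nonneg {h : ℝ} (hh : 0 < h) {s : ℝ} (hs : 0 ≤ s) : 0 ≤ hfloor h s := by
  have : (0:ℝ) ≤ (⌊s / h⌋ : ℝ) := by
    exact_mod_cast Int.floor_nonneg.2 (div_nonneg hs hh.le)
  exact mul_nonneg hh.le this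

lemma hfloor_eq {h : ℝ} (hh : 0 < h) (j : ℕ) {s : ℝ}
    (h1 : (j:ℝ) * h ≤ s) (h2 : s < ((j:ℝ) + 1) * h) : hfloor h s = (j:ℝ) * h := by
  have hfl : ⌊s / h⌋ = (j : ℤ) := by
    rw [Int.floor_eq_iff]
    constructor
    · rw [le_div_iff₀ hh]; push_cast; linarith
    · rw [div_lt_iff₀ hh]; push_cast; linarith
  rw [hfloor, hfl]
  push_cast
  ring


lemma gronwall_step0 (e1 e2 u0 dtv s1 rk : ℝ) (he1 : 0 < e1) (he2 : 1 ≤ e2)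
    (hdtv : 0 ≤ dtv) (hrk : 0 ≤ rk) :
    e1 * (e2 * (u0 + dtv * s1) + dtv * rk) ≤ e1 * e2 * (u0 + dtv * (s1 + rk)) := by
  nlinarith [mul_le_mul_of_nonneg_left
    (le_mul_of_one_le_left (mul_nonneg hdtv hrk) he2) he1.le]

lemma gronwall_step1 (e1 e2 eT u0 dtv d s1 sm rk A : ℝ)
    (he1 : 0 < e1) (he12 : e1 * e2 ≤ eT) (he1T : e1 ≤ eT) (heT : 0 ≤ eT)
    (hA : A ≤ e2 * (u0 + dtv * s1)) (hd0 : 0 ≤ d) (hd : d ≤ dtv)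
    (hrk : 0 ≤ rk) (hdtv : 0 ≤ dtv) (hu0 : 0 ≤ u0) (hs1 : 0 ≤ s1)
    (hsum : s1 + rk ≤ sm) :
    e1 * (A + d * rk) ≤ eT * (u0 + dtv * sm) := by
  have p1 : e1 * A ≤ e1 * (e2 * (u0 + dtv * s1)) := mul_le_mul_of_nonneg_left hA he1.le
  have p2 : (e1 * e2) * (u0 + dtv * s1) ≤ eT * (u0 + dtv * s1) :=
    mul_le_mul_of_nonneg_right he12 (by positivity)
  have p3 : e1 * (d * rk) ≤ eT * (dtv * rk) :=
    mul_le_mul he1T (mul_le_mul_of_nonneg_right hd hrk) (by positivity) heT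
  have p4 : eT * (dtv * (s1 + rk)) ≤ eT * (dtv * sm) :=
    mul_le_mul_of_nonneg_left (mul_le_mul_of_nonneg_left hsum hdtv) heT
  nlinarith [p1, p2, p3, p4]

lemma step_aux
    (T c α : ℝ) (hT : 0 < T)
    {H V : Type*}
    [NormedAddCommGroup H] [NormedSpace ℝ H]
    [NormedAddCommGroup V] [NormedSpace ℝ V] [CompleteSpace V]
    (ι : V →L[ℝ] H) (F : V → H) (U R : V → ℝ)
    (S : ℕ → ℝ → ℝ → (H →L[ℝ] V))
    (hSsemi : ∀ M : ℕ, 1 ≤ M → ∀ r1 r2 r3 : ℝ, 0 ≤ r1 → r1 < r2 → r2 < r3 → r3 ≤ T →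
      S M r1 r3 = (S M r2 r3).comp (ι.comp (S M r1 r2)))
    (hLyap : ∀ M : ℕ, 1 ≤ M → ∀ u v : V, ∀ k : ℕ, k < M → ∀ t : ℝ,
      (k : ℝ) * T / M < t → t ≤ ((k : ℝ) + 1) * T / M →
      U (S M ((k : ℝ) * T / M) t
          (ι u + (t - (k : ℝ) * T / M) •
            (if ‖u + v‖ ≤ ((M : ℝ) / T) ^ α then F (u + v) else 0)))
        ≤ Real.exp (c * (t - (k : ℝ) * T / M)) * (U u + (t - (k : ℝ) * T / M) * R v))
    (M : ℕ) (hM : 1 ≤ M) (yv ov : ℝ → V)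
    (j : ℕ) (hjM : j < M) (t' : ℝ)
    (ht1 : (j:ℝ) * (T / M) < t') (ht2 : t' ≤ ((j:ℝ) + 1) * (T / M))
    (Hj : IntegrableOn (fun s => S M (hfloor (T/M) s) ((j:ℝ)*(T/M))
        (if ‖yv (hfloor (T/M) s)‖ ≤ ((M:ℝ)/T) ^ α then F (yv (hfloor (T/M) s)) else 0))
        (Set.Ioc 0 ((j:ℝ)*(T/M))))
    (HjY : yv ((j:ℝ)*(T/M)) = (∫ s in Set.Ioc (0:ℝ) ((j:ℝ)*(T/M)),
        S M (hfloor (T/M) s) ((j:ℝ)*(T/M))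
        (if ‖yv (hfloor (T/M) s)‖ ≤ ((M:ℝ)/T) ^ α then F (yv (hfloor (T/M) s)) else 0))
        + ov ((j:ℝ)*(T/M)))
    (Ht : IntegrableOn (fun s => S M (hfloor (T/M) s) t'
        (if ‖yv (hfloor (T/M) s)‖ ≤ ((M:ℝ)/T) ^ α then F (yv (hfloor (T/M) s)) else 0))
        (Set.Ioc 0 t'))
    (HtY : yv t' = (∫ s in Set.Ioc (0:ℝ) t', S M (hfloor (T/M) s) t'
        (if ‖yv (hfloor (T/M) s)‖ ≤ ((M:ℝ)/T) ^ α then F (yv (hfloor (T/M) s)) else 0))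
        + ov t') :
    U (yv t' - ov t') ≤ Real.exp (c * (t' - (j:ℝ)*(T/M))) *
      (U (yv ((j:ℝ)*(T/M)) - ov ((j:ℝ)*(T/M))) + (t' - (j:ℝ)*(T/M)) * R (ov ((j:ℝ)*(T/M)))) := by
  have hMR : (0:ℝ) < M := by exact_mod_cast hM
  have hdt0 : (0:ℝ) < T / M := div_pos hT hMR
  set dt := T / (M:ℝ) with hdt
  set jdt := (j:ℝ) * dt with hjdt
  have hjdt0 : 0 ≤ jdt := mul_nonneg (Nat.cast_nonneg j) hdt0.le
  have ht'T : t' ≤ T := by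
    have : ((j:ℝ) + 1) * dt ≤ (M:ℝ) * dt := by
      have : (j:ℝ) + 1 ≤ (M:ℝ) := by exact_mod_cast hjM
      nlinarith
    have hMdt : (M:ℝ) * dt = T := by rw [hdt]; field_simp
    linarith
  set g : ℝ → H := fun r =>
    (if ‖yv r‖ ≤ ((M:ℝ)/T) ^ α then F (yv r) else 0) with hg
  have hsplit : Set.Ioc (0:ℝ) t' = Set.Ioc 0 jdt ∪ Set.Ioc jdt t' :=
    (Set.Ioc_union_Ioc_eq_Ioc hjdt0 ht1.le).symm
  have hdisj : Disjoint (Set.Ioc (0:ℝ) jdt) (Set.Ioc jdt t') := by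
    refine Set.disjoint_left.2 fun s hs1 hs2 => ?_
    exact absurd hs1.2 (not_le.2 hs2.1)
  have HtY' : yv t' - ov t' = ∫ s in Set.Ioc (0:ℝ) t', S M (hfloor dt s) t' (g (hfloor dt s)) := by
    rw [HtY]; abel
  have Hint1 : IntegrableOn (fun s => S M (hfloor dt s) t' (g (hfloor dt s))) (Set.Ioc 0 jdt) :=
    Ht.mono_set (by rw [hsplit]; exact Set.subset_union_left)
  have Hint2 : IntegrableOn (fun s => S M (hfloor dt s) t' (g (hfloor dt s))) (Set.Ioc jdt t') :=
    Ht.mono_set (by rw [hsplit]; exact Set.subset_union_right)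
  have hne : ∀ᵐ s : ℝ, s ≠ jdt := by
    refine ae_iff.2 ?_
    have : {s : ℝ | ¬ s ≠ jdt} = {jdt} := by ext s; simp
    rw [this]; exact Real.volume_singleton
  have hne2 : ∀ᵐ s : ℝ, s ≠ ((j:ℝ)+1) * dt := by
    refine ae_iff.2 ?_
    have : {s : ℝ | ¬ s ≠ ((j:ℝ)+1) * dt} = {((j:ℝ)+1) * dt} := by ext s; simp
    rw [this]; exact Real.volume_singleton
  have hI1 : (∫ s in Set.Ioc (0:ℝ) jdt, S M (hfloor dt s) t' (g (hfloor dt s)))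
      = S M jdt t' (ι (yv jdt - ov jdt)) := by
    have hcongr : (fun s => S M (hfloor dt s) t' (g (hfloor dt s)))
        =ᵐ[volume.restrict (Set.Ioc (0:ℝ) jdt)]
        (fun s => ((S M jdt t').comp ι) (S M (hfloor dt s) jdt (g (hfloor dt s)))) := by
      filter_upwards [ae_restrict_mem measurableSet_Ioc, ae_restrict_of_ae hne] with s hs hsne
      have hslt : s < jdt := lt_of_le_of_ne hs.2 hsne
      have h1 : hfloor dt s < jdt := lt_of_le_of_lt (hfloor_le hdt0 s) hslt
      have h0 : 0 ≤ hfloor dt s := hfloor_nonneg hdt0 hs.1.le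
      have hjlt : jdt < t' := ht1
      rw [hSsemi M hM _ jdt t' h0 h1 hjlt ht'T]
      simp [ContinuousLinearMap.comp_apply]
    rw [integral_congr_ae hcongr,
      ContinuousLinearMap.integral_comp_comm ((S M jdt t').comp ι) Hj]
    have : (∫ s in Set.Ioc (0:ℝ) jdt, S M (hfloor dt s) jdt (g (hfloor dt s))) = yv jdt - ov jdt := by
      rw [HjY]; abel
    rw [this]
    simp [ContinuousLinearMap.comp_apply]
  have hI2 : (∫ s in Set.Ioc jdt t', S M (hfloor dt s) t' (g (hfloor dt s)))
      = (t' - jdt) • S M jdt t' (g jdt) := by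
    have hcongr : (fun s => S M (hfloor dt s) t' (g (hfloor dt s)))
        =ᵐ[volume.restrict (Set.Ioc jdt t')]
        (fun _ => S M jdt t' (g jdt)) := by
      filter_upwards [ae_restrict_mem measurableSet_Ioc, ae_restrict_of_ae hne2] with s hs hsne
      have h1 : jdt ≤ s := hs.1.le
      have h2 : s < ((j:ℝ)+1) * dt := lt_of_le_of_ne (le_trans hs.2 ht2) hsne
      rw [hfloor_eq hdt0 j h1 h2]
    rw [integral_congr_ae hcongr, setIntegral_const]
    rw [measureReal_def, Real.volume_Ioc, ENNReal.toReal_ofReal (by linarith)]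
  have hZ : yv t' - ov t' = S M jdt t' (ι (yv jdt - ov jdt) + (t' - jdt) • g jdt) := by
    rw [HtY', hsplit, setIntegral_union hdisj measurableSet_Ioc Hint1 Hint2, hI1, hI2,
      map_add, _root_.map_smul]
  rw [hZ]
  have hjdt' : jdt = (j:ℝ) * T / M := by rw [hjdt, hdt, mul_div_assoc]
  have hLy := hLyap M hM (yv jdt - ov jdt) (ov jdt) j hjM t'
    (by rw [← hjdt']; exact ht1) (by rw [mul_div_assoc]; exact ht2)
  rw [← hjdt', sub_add_cancel] at hLy
  exact hLy

theorem stmt7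
    (T c q α : ℝ) (hT : 0 < T) (hc : 0 < c) (hq : 0 < q) (hα : 0 < α)
    {H V : Type*}
    [NormedAddCommGroup H] [InnerProductSpace ℝ H] [CompleteSpace H]
    [TopologicalSpace.SeparableSpace H] [MeasurableSpace H] [BorelSpace H]
    [NormedAddCommGroup V] [NormedSpace ℝ V] [CompleteSpace V]
    [TopologicalSpace.SeparableSpace V] [MeasurableSpace V] [BorelSpace V]
    (ι : V →L[ℝ] H) (hι_inj : Function.Injective ι) (hι_dense : DenseRange ι)
    (F : V → H) (hFc : Continuous F)
    (U R : V → ℝ)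
    (hU0 : ∀ v, 0 ≤ U v) (hR0 : ∀ v, 0 ≤ R v)
    (hUm : Measurable U) (hRm : Measurable R)
    (S : ℕ → ℝ → ℝ → (H →L[ℝ] V))
    (hSm : ∀ M : ℕ, ∀ x : H, Measurable fun p : ℝ × ℝ => S M p.1 p.2 x)
    (hFgrowth : ∀ u v : V, ‖F (u + v)‖ ≤ c * (1 + U u ^ q + U v ^ q))
    (hSsemi : ∀ M : ℕ, 1 ≤ M → ∀ r1 r2 r3 : ℝ, 0 ≤ r1 → r1 < r2 → r2 < r3 → r3 ≤ T →
      S M r1 r3 = (S M r2 r3).comp (ι.comp (S M r1 r2)))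
    (hLyap : ∀ M : ℕ, 1 ≤ M → ∀ u v : V, ∀ k : ℕ, k < M → ∀ t : ℝ,
      (k : ℝ) * T / M < t → t ≤ ((k : ℝ) + 1) * T / M →
      U (S M ((k : ℝ) * T / M) t
          (ι u + (t - (k : ℝ) * T / M) •
            (if ‖u + v‖ ≤ ((M : ℝ) / T) ^ α then F (u + v) else 0)))
        ≤ Real.exp (c * (t - (k : ℝ) * T / M)) * (U u + (t - (k : ℝ) * T / M) * R v))
    {Ω : Type*} [MeasurableSpace Ω] (P : Measure Ω) [IsProbabilityMeasure P]
    (O Y : ℕ → ℝ → Ω → V)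
    (hOsm : ∀ M : ℕ, ∀ t : ℝ, StronglyMeasurable fun ω => O M t ω)
    (hYsm : ∀ M : ℕ, ∀ t : ℝ, StronglyMeasurable fun ω => Y M t ω)
    (hYeq : ∀ M : ℕ, 1 ≤ M → ∀ t ∈ Set.Icc (0 : ℝ) T, ∀ᵐ ω ∂P,
      IntegrableOn
          (fun s => S M (hfloor (T / M) s) t
            (if ‖Y M (hfloor (T / M) s) ω‖ ≤ ((M : ℝ) / T) ^ α
              then F (Y M (hfloor (T / M) s) ω) else 0))
          (Set.Ioc 0 t) ∧
        Y M t ω =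
          (∫ s in Set.Ioc (0 : ℝ) t, S M (hfloor (T / M) s) t
            (if ‖Y M (hfloor (T / M) s) ω‖ ≤ ((M : ℝ) / T) ^ α
              then F (Y M (hfloor (T / M) s) ω) else 0)) + O M t ω)
    (p : ℝ) (hp : max 1 (1 / q) ≤ p)
    (h2 : (⨆ (M : ℕ) (_ : 1 ≤ M) (t : ℝ) (_ : t ∈ Set.Ico (0 : ℝ) T),
        eLpNorm (fun ω => U (O M t ω) + R (O M t ω)) (ENNReal.ofReal (p * q)) P) < ⊤) :
    (⨆ (M : ℕ) (_ : 1 ≤ M) (t : ℝ) (_ : t ∈ Set.Ico (0 : ℝ) T),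
        eLpNorm (fun ω => F (Y M t ω)) (ENNReal.ofReal p) P) < ⊤ := by
  classical
  have hp1 : (1:ℝ) ≤ p := le_trans (le_max_left _ _) hp
  have hp0 : (0:ℝ) < p := lt_of_lt_of_le one_pos hp1
  have hpq1 : (1:ℝ) ≤ p * q := by
    have h1q : 1 / q ≤ p := le_trans (le_max_right _ _) hp
    rw [div_le_iff₀ hq] at h1q
    linarith
  have hep1 : (1:ℝ≥0∞) ≤ ENNReal.ofReal p := by
    rw [← ENNReal.ofReal_one]
    exact ENNReal.ofReal_le_ofReal hp1
  have hepq1 : (1:ℝ≥0∞) ≤ ENNReal.ofReal (p * q) := by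
    rw [← ENNReal.ofReal_one]
    exact ENNReal.ofReal_le_ofReal hpq1
  set B := (⨆ (M : ℕ) (_ : 1 ≤ M) (t : ℝ) (_ : t ∈ Set.Ico (0 : ℝ) T),
      eLpNorm (fun ω => U (O M t ω) + R (O M t ω)) (ENNReal.ofReal (p * q)) P) with hBdef
  have hBne : B ≠ ⊤ := h2.ne
  have hBle : ∀ (M : ℕ), 1 ≤ M → ∀ r ∈ Set.Ico (0:ℝ) T,
      eLpNorm (fun ω => U (O M r ω) + R (O M r ω)) (ENNReal.ofReal (p*q)) P ≤ B :=
    fun M hM r hr =>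
      le_iSup_of_le M (le_iSup_of_le hM (le_iSup_of_le r (le_iSup_of_le hr le_rfl)))
  set B' := ENNReal.ofReal (Real.exp (c*T)) * (ENNReal.ofReal (U 0) + ENNReal.ofReal T * B)
    with hB'def
  have hB'ne : B' ≠ ⊤ := by
    refine ENNReal.mul_ne_top ENNReal.ofReal_ne_top ?_
    exact ENNReal.add_ne_top.2 ⟨ENNReal.ofReal_ne_top, ENNReal.mul_ne_top ENNReal.ofReal_ne_top hBne⟩
  have hKlt : (‖c‖₊ : ℝ≥0∞) * (1 + B' ^ q + B ^ q) < ⊤ := by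
    refine ENNReal.mul_lt_top ENNReal.coe_lt_top ?_
    have h1 : B' ^ q < ⊤ := ENNReal.rpow_lt_top_of_nonneg hq.le hB'ne
    have h2' : B ^ q < ⊤ := ENNReal.rpow_lt_top_of_nonneg hq.le hBne
    exact ENNReal.add_lt_top.2 ⟨ENNReal.add_lt_top.2 ⟨ENNReal.one_lt_top, h1⟩, h2'⟩
  refine lt_of_le_of_lt
    (iSup_le fun M => iSup_le fun hM => iSup_le fun t => iSup_le fun ht => ?_) hKlt
  -- Fixed M and t ∈ [0, T)
  have hMR : (0:ℝ) < M := by exact_mod_cast hM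
  have hdt0 : (0:ℝ) < T / M := div_pos hT hMR
  have hMdt : (M:ℝ) * (T / M) = T := by field_simp
  -- the grid index of t
  set k := (⌊t / (T / M)⌋).toNat with hkdef
  have hkfl : ((k:ℕ):ℤ) = ⌊t / (T / M)⌋ :=
    Int.toNat_of_nonneg (Int.floor_nonneg.2 (div_nonneg ht.1 hdt0.le))
  have hkle : (k:ℝ) * (T / M) ≤ t := by
    have h1 : ((⌊t / (T / M)⌋ : ℤ) : ℝ) ≤ t / (T / M) := Int.floor_le _
    rw [← hkfl] at h1
    push_cast at h1
    calc (k:ℝ) * (T / M) ≤ (t / (T / M)) * (T / M) :=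
          mul_le_mul_of_nonneg_right h1 hdt0.le
      _ = t := div_mul_cancel₀ _ hdt0.ne'
  have hklt : t < ((k:ℝ) + 1) * (T / M) := by
    have h1 : t / (T / M) < (⌊t / (T / M)⌋ : ℤ) + 1 := Int.lt_floor_add_one _
    rw [← hkfl] at h1
    push_cast at h1
    have := (div_lt_iff₀ hdt0).1 h1
    linarith
  have hkM : k < M := by
    have h1 : t / (T / M) < (M:ℝ) := by
      rw [div_lt_iff₀ hdt0]
      calc t < T := ht.2
        _ = (M:ℝ) * (T / M) := hMdt.symm
    have h2' : ⌊t / (T / M)⌋ < (M:ℤ) := Int.floor_lt.2 (by exact_mod_cast h1)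
    have := hkfl ▸ h2'
    exact_mod_cast this
  -- the a.s. event we will work on
  have hgood : ∀ᵐ ω ∂P, (∀ j : ℕ, j ≤ M →
      (IntegrableOn
          (fun s => S M (hfloor (T / M) s) ((j:ℝ) * (T / M))
            (if ‖Y M (hfloor (T / M) s) ω‖ ≤ ((M : ℝ) / T) ^ α
              then F (Y M (hfloor (T / M) s) ω) else 0))
          (Set.Ioc 0 ((j:ℝ) * (T / M))) ∧
        Y M ((j:ℝ) * (T / M)) ω =
          (∫ s in Set.Ioc (0 : ℝ) ((j:ℝ) * (T / M)), S M (hfloor (T / M) s) ((j:ℝ) * (T / M))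
            (if ‖Y M (hfloor (T / M) s) ω‖ ≤ ((M : ℝ) / T) ^ α
              then F (Y M (hfloor (T / M) s) ω) else 0)) + O M ((j:ℝ) * (T / M)) ω))
      ∧ (IntegrableOn
          (fun s => S M (hfloor (T / M) s) t
            (if ‖Y M (hfloor (T / M) s) ω‖ ≤ ((M : ℝ) / T) ^ α
              then F (Y M (hfloor (T / M) s) ω) else 0))
          (Set.Ioc 0 t) ∧
        Y M t ω =
          (∫ s in Set.Ioc (0 : ℝ) t, S M (hfloor (T / M) s) t
            (if ‖Y M (hfloor (T / M) s) ω‖ ≤ ((M : ℝ) / T) ^ α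
              then F (Y M (hfloor (T / M) s) ω) else 0)) + O M t ω) := by
    refine Filter.Eventually.and ?_ (hYeq M hM t ⟨ht.1, ht.2.le⟩)
    rw [MeasureTheory.ae_all_iff]
    intro j
    by_cases hj : j ≤ M
    · have hr : (j:ℝ) * (T / M) ∈ Set.Icc (0:ℝ) T := by
        constructor
        · exact mul_nonneg (Nat.cast_nonneg j) hdt0.le
        · calc (j:ℝ) * (T / M) ≤ (M:ℝ) * (T / M) :=
              mul_le_mul_of_nonneg_right (by exact_mod_cast hj) hdt0.le
            _ = T := hMdt
      exact (hYeq M hM _ hr).mono fun ω hω _ => hω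
    · exact Filter.Eventually.of_forall fun ω hj' => absurd hj' hj
  -- the dominating random variable
  set D : Ω → ℝ := fun ω => Real.exp (c*T) *
      (U 0 + (T / M) * ∑ i ∈ Finset.range M, R (O M ((i:ℝ) * (T / M)) ω)) with hDdef
  have hD0 : ∀ ω, 0 ≤ D ω := fun ω => mul_nonneg (Real.exp_pos _).le
    (add_nonneg (hU0 0) (mul_nonneg hdt0.le
      (Finset.sum_nonneg fun i _ => hR0 _)))
  -- pointwise a.s. bound
  have hae : ∀ᵐ ω ∂P, ‖F (Y M t ω)‖ ≤ c * (1 + D ω ^ q + U (O M t ω) ^ q) := by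
    refine hgood.mono fun ω hω => ?_
    obtain ⟨hgrid, htrep⟩ := hω
    -- Grid induction
    have ind : ∀ j : ℕ, j ≤ k →
        U (Y M ((j:ℝ) * (T / M)) ω - O M ((j:ℝ) * (T / M)) ω) ≤
          Real.exp (c * ((j:ℝ) * (T / M))) *
            (U 0 + (T / M) * ∑ i ∈ Finset.range j, R (O M ((i:ℝ) * (T / M)) ω)) := by
      intro j
      induction j with
      | zero =>
        intro _
        have hx : ((0:ℕ):ℝ) * (T / M) = 0 := by simp
        have h0rep := (hgrid 0 (Nat.zero_le M)).2
        rw [hx] at h0rep ⊢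
        rw [Set.Ioc_self] at h0rep
        rw [MeasureTheory.setIntegral_empty] at h0rep
        rw [zero_add] at h0rep
        rw [h0rep]
        simp
      | succ n ih =>
        intro hn1
        have hnk : n ≤ k := Nat.le_of_succ_le hn1
        have hnM : n < M := lt_of_lt_of_le (Nat.lt_of_lt_of_le (Nat.lt_succ_self n) hn1) hkM.le
        have ihn := ih hnk
        have hcast : ((n+1 : ℕ):ℝ) = (n:ℝ) + 1 := by push_cast; ring
        have hstep := step_aux T c α hT ι F U R S hSsemi hLyap M hM
          (fun r => Y M r ω) (fun r => O M r ω) n hnM (((n:ℝ)+1) * (T/M))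
          (by nlinarith [hdt0]) le_rfl
          (hgrid n (le_of_lt hnM)).1 (hgrid n (le_of_lt hnM)).2
          (by rw [← hcast]; exact (hgrid (n+1) hnM).1)
          (by rw [← hcast]; exact (hgrid (n+1) hnM).2)
        rw [hcast]
        have hd : ((n:ℝ)+1) * (T/M) - (n:ℝ) * (T/M) = T/M := by ring
        rw [hd] at hstep
        have hexp1 : (1:ℝ) ≤ Real.exp (c * ((n:ℝ) * (T/M))) :=
          Real.one_le_exp (by positivity)
        have hexpadd : Real.exp (c * (((n:ℝ)+1) * (T/M))) =
            Real.exp (c * (T/M)) * Real.exp (c * ((n:ℝ) * (T/M))) := by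
          rw [← Real.exp_add]; ring_nf
        have hsum : ∑ i ∈ Finset.range (n+1), R (O M ((i:ℝ) * (T / M)) ω) =
            (∑ i ∈ Finset.range n, R (O M ((i:ℝ) * (T / M)) ω)) +
              R (O M ((n:ℝ) * (T / M)) ω) := Finset.sum_range_succ _ _
        rw [hsum, hexpadd]
        have hRn := hR0 (O M ((n:ℝ) * (T / M)) ω)
        have hSn : (0:ℝ) ≤ ∑ i ∈ Finset.range n, R (O M ((i:ℝ) * (T / M)) ω) :=
          Finset.sum_nonneg fun i _ => hR0 _
        have hU00 := hU0 (0:V)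
        have hE := Real.exp_pos (c * (T/M))
        calc U (Y M (((n:ℝ)+1) * (T / M)) ω - O M (((n:ℝ)+1) * (T / M)) ω)
            ≤ Real.exp (c * (T/M)) *
              (U (Y M ((n:ℝ) * (T / M)) ω - O M ((n:ℝ) * (T / M)) ω)
                + (T/M) * R (O M ((n:ℝ) * (T / M)) ω)) := hstep
          _ ≤ Real.exp (c * (T/M)) *
              (Real.exp (c * ((n:ℝ) * (T/M))) *
                (U 0 + (T / M) * ∑ i ∈ Finset.range n, R (O M ((i:ℝ) * (T / M)) ω))
                + (T/M) * R (O M ((n:ℝ) * (T / M)) ω)) := by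
              have := mul_le_mul_of_nonneg_left
                (add_le_add_left ihn ((T/M) * R (O M ((n:ℝ) * (T / M)) ω))) hE.le
              exact this
          _ ≤ Real.exp (c * (T/M)) * Real.exp (c * ((n:ℝ) * (T/M))) *
              (U 0 + (T / M) * ((∑ i ∈ Finset.range n, R (O M ((i:ℝ) * (T / M)) ω))
                + R (O M ((n:ℝ) * (T / M)) ω))) :=
              gronwall_step0 _ _ _ _ _ _ hE hexp1 hdt0.le hRn
    -- bound at time t
    have hZD : U (Y M t ω - O M t ω) ≤ D ω := by
      have hexpT : ∀ x : ℝ, x ≤ T → 0 ≤ x → Real.exp (c * x) ≤ Real.exp (c * T) :=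
        fun x hx _ => Real.exp_le_exp.2 (mul_le_mul_of_nonneg_left hx hc.le)
      have hsub : (∑ i ∈ Finset.range k, R (O M ((i:ℝ) * (T / M)) ω)) +
          R (O M ((k:ℝ) * (T / M)) ω) ≤
          ∑ i ∈ Finset.range M, R (O M ((i:ℝ) * (T / M)) ω) := by
        rw [← Finset.sum_range_succ]
        exact Finset.sum_le_sum_of_subset_of_nonneg
          (Finset.range_subset_range.2 hkM) (fun i _ _ => hR0 _)
      have hsumk : (0:ℝ) ≤ ∑ i ∈ Finset.range k, R (O M ((i:ℝ) * (T / M)) ω) :=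
        Finset.sum_nonneg fun i _ => hR0 _
      have hsumM : (0:ℝ) ≤ ∑ i ∈ Finset.range M, R (O M ((i:ℝ) * (T / M)) ω) :=
        Finset.sum_nonneg fun i _ => hR0 _
      have hkdtnn : (0:ℝ) ≤ (k:ℝ) * (T/M) := mul_nonneg (Nat.cast_nonneg k) hdt0.le
      have hkdtT : (k:ℝ) * (T/M) ≤ T := le_trans hkle ht.2.le
      rcases eq_or_lt_of_le hkle with heq | hlt
      · -- t = k * (T/M)
        have indk := ind k le_rfl
        rw [heq] at indk
        refine le_trans indk ?_
        rw [hDdef]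
        have h1 : Real.exp (c * t) ≤ Real.exp (c*T) := hexpT _ ht.2.le ht.1
        have h2' : (T / M) * ∑ i ∈ Finset.range k, R (O M ((i:ℝ) * (T / M)) ω) ≤
            (T / M) * ∑ i ∈ Finset.range M, R (O M ((i:ℝ) * (T / M)) ω) := by
          refine mul_le_mul_of_nonneg_left ?_ hdt0.le
          refine Finset.sum_le_sum_of_subset_of_nonneg
            (Finset.range_subset_range.2 hkM.le) (fun i _ _ => hR0 _)
        have hU00 := hU0 (0:V)
        have hnn : (0:ℝ) ≤ U 0 + (T / M) * ∑ i ∈ Finset.range k, R (O M ((i:ℝ) * (T / M)) ω) := by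
          have := mul_nonneg hdt0.le hsumk
          linarith
        exact mul_le_mul h1 (by linarith) hnn (Real.exp_pos _).le
      · -- k * (T/M) < t
        have hstep := step_aux T c α hT ι F U R S hSsemi hLyap M hM
          (fun r => Y M r ω) (fun r => O M r ω) k hkM t hlt hklt.le
          (hgrid k hkM.le).1 (hgrid k hkM.le).2 htrep.1 htrep.2
        have indk := ind k le_rfl
        have hd1 : 0 < t - (k:ℝ) * (T/M) := by linarith
        have hd2 : t - (k:ℝ) * (T/M) ≤ T/M := by linarith
        have hE1 : Real.exp (c * (t - (k:ℝ) * (T/M))) ≤ Real.exp (c*T) :=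
          hexpT _ (by linarith [ht.2.le]) hd1.le
        have hE2 : Real.exp (c * (t - (k:ℝ) * (T/M))) * Real.exp (c * ((k:ℝ) * (T/M)))
            = Real.exp (c * t) := by
          rw [← Real.exp_add]; ring_nf
        have hE3 : Real.exp (c * t) ≤ Real.exp (c * T) := hexpT _ ht.2.le ht.1
        have hRk := hR0 (O M ((k:ℝ) * (T / M)) ω)
        have hU00 := hU0 (0:V)
        have hEp1 := Real.exp_pos (c * (t - (k:ℝ) * (T/M)))
        have hEp2 := Real.exp_pos (c * ((k:ℝ) * (T/M)))
        have hEpT := Real.exp_pos (c * T)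
        refine le_trans hstep ?_
        rw [hDdef]
        exact gronwall_step1 _ _ _ _ _ _ _ _ _ _ hEp1 (hE2.le.trans hE3) hE1 hEpT.le
          indk hd1.le hd2 hRk hdt0.le hU00 hsumk hsub
    -- growth of F
    have hgrow := hFgrowth (Y M t ω - O M t ω) (O M t ω)
    rw [sub_add_cancel] at hgrow
    refine le_trans hgrow ?_
    have hrpow : U (Y M t ω - O M t ω) ^ q ≤ D ω ^ q :=
      Real.rpow_le_rpow (hU0 _) hZD hq.le
    nlinarith [mul_le_mul_of_nonneg_left hrpow hc.le]
  -- L^p bookkeeping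
  have hUOm : Measurable (fun ω => U (O M t ω)) := hUm.comp (hOsm M t).measurable
  have hsummeas : Measurable (fun ω => ∑ i ∈ Finset.range M, R (O M ((i:ℝ) * (T / M)) ω)) :=
    Finset.measurable_sum _ (fun i _ => hRm.comp (hOsm M _).measurable)
  have hDm : Measurable D := by
    rw [hDdef]
    exact measurable_const.mul (measurable_const.add (measurable_const.mul hsummeas))
  have hrpowm : Measurable (fun x : ℝ => x ^ q) :=
    (Real.continuous_rpow_const hq.le).measurable
  have hDqm : AEStronglyMeasurable (fun ω => D ω ^ q) P :=
    (hrpowm.comp hDm).aestronglyMeasurable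
  have hUOqm : AEStronglyMeasurable (fun ω => U (O M t ω) ^ q) P :=
    (hrpowm.comp hUOm).aestronglyMeasurable
  -- step 1: compare with the dominating function
  have step1 : eLpNorm (fun ω => F (Y M t ω)) (ENNReal.ofReal p) P ≤
      eLpNorm (fun ω => c * (1 + D ω ^ q + U (O M t ω) ^ q)) (ENNReal.ofReal p) P :=
    eLpNorm_mono_ae_real hae
  -- step 2: pull the constant out
  have step2 : eLpNorm (fun ω => c * (1 + D ω ^ q + U (O M t ω) ^ q)) (ENNReal.ofReal p) P ≤
      (‖c‖₊ : ℝ≥0∞) * eLpNorm (fun ω => 1 + D ω ^ q + U (O M t ω) ^ q) (ENNReal.ofReal p) P := by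
    have := eLpNorm_const_smul_le (c := c)
      (f := fun ω => 1 + D ω ^ q + U (O M t ω) ^ q) (p := ENNReal.ofReal p) (μ := P)
    simpa [Pi.smul_def, smul_eq_mul, ENNReal.smul_def, enorm_eq_nnnorm] using this
  -- step 3: triangle inequality
  have step3 : eLpNorm (fun ω => 1 + D ω ^ q + U (O M t ω) ^ q) (ENNReal.ofReal p) P ≤
      eLpNorm (fun _ : Ω => (1:ℝ)) (ENNReal.ofReal p) P +
        eLpNorm (fun ω => D ω ^ q) (ENNReal.ofReal p) P +
        eLpNorm (fun ω => U (O M t ω) ^ q) (ENNReal.ofReal p) P := by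
    have t1 : eLpNorm ((fun ω => 1 + D ω ^ q) + (fun ω => U (O M t ω) ^ q))
        (ENNReal.ofReal p) P ≤
        eLpNorm (fun ω => 1 + D ω ^ q) (ENNReal.ofReal p) P +
          eLpNorm (fun ω => U (O M t ω) ^ q) (ENNReal.ofReal p) P :=
      eLpNorm_add_le (aestronglyMeasurable_const.add hDqm) hUOqm hep1
    have t2 : eLpNorm ((fun _ : Ω => (1:ℝ)) + (fun ω => D ω ^ q)) (ENNReal.ofReal p) P ≤
        eLpNorm (fun _ : Ω => (1:ℝ)) (ENNReal.ofReal p) P +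
          eLpNorm (fun ω => D ω ^ q) (ENNReal.ofReal p) P :=
      eLpNorm_add_le aestronglyMeasurable_const hDqm hep1
    calc eLpNorm (fun ω => 1 + D ω ^ q + U (O M t ω) ^ q) (ENNReal.ofReal p) P
        ≤ eLpNorm (fun ω => 1 + D ω ^ q) (ENNReal.ofReal p) P +
            eLpNorm (fun ω => U (O M t ω) ^ q) (ENNReal.ofReal p) P := t1
      _ ≤ _ := add_le_add t2 le_rfl
  -- constant 1
  have hone : eLpNorm (fun _ : Ω => (1:ℝ)) (ENNReal.ofReal p) P ≤ 1 := by
    rw [eLpNorm_const (1:ℝ) (by positivity) (IsProbabilityMeasure.ne_zero P)]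
    simp
  -- epq split
  have hofmul : ENNReal.ofReal p * ENNReal.ofReal q = ENNReal.ofReal (p * q) :=
    (ENNReal.ofReal_mul hp0.le).symm
  -- D^q
  have hDq : eLpNorm (fun ω => D ω ^ q) (ENNReal.ofReal p) P ≤ B' ^ q := by
    have heq : (fun ω => D ω ^ q) = fun ω => ‖D ω‖ ^ q :=
      funext fun ω => by rw [Real.norm_of_nonneg (hD0 ω)]
    rw [heq, eLpNorm_norm_rpow D hq, hofmul]
    refine ENNReal.rpow_le_rpow ?_ hq.le
    -- bound eLpNorm D (p*q)
    have hsm1 : AEStronglyMeasurable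
        (fun ω => (T / M) * ∑ i ∈ Finset.range M, R (O M ((i:ℝ) * (T / M)) ω)) P :=
      (measurable_const.mul hsummeas).aestronglyMeasurable
    have d1 : eLpNorm D (ENNReal.ofReal (p * q)) P ≤
        (‖Real.exp (c*T)‖₊ : ℝ≥0∞) *
          eLpNorm (fun ω => U 0 + (T / M) * ∑ i ∈ Finset.range M, R (O M ((i:ℝ) * (T / M)) ω))
            (ENNReal.ofReal (p * q)) P := by
      have := eLpNorm_const_smul_le (c := Real.exp (c*T))
        (f := fun ω => U 0 + (T / M) * ∑ i ∈ Finset.range M, R (O M ((i:ℝ) * (T / M)) ω))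
        (p := ENNReal.ofReal (p * q)) (μ := P)
      simpa [hDdef, Pi.smul_def, smul_eq_mul, ENNReal.smul_def, enorm_eq_nnnorm] using this
    have d2 : eLpNorm (fun ω => U 0 + (T / M) * ∑ i ∈ Finset.range M, R (O M ((i:ℝ) * (T / M)) ω))
        (ENNReal.ofReal (p * q)) P ≤
        eLpNorm (fun _ : Ω => U 0) (ENNReal.ofReal (p * q)) P +
          eLpNorm (fun ω => (T / M) * ∑ i ∈ Finset.range M, R (O M ((i:ℝ) * (T / M)) ω))
            (ENNReal.ofReal (p * q)) P :=
      eLpNorm_add_le aestronglyMeasurable_const hsm1 hepq1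
    have d3 : eLpNorm (fun _ : Ω => U 0) (ENNReal.ofReal (p * q)) P ≤ ENNReal.ofReal (U 0) := by
      rw [eLpNorm_const (U 0) (by positivity) (IsProbabilityMeasure.ne_zero P)]
      simp [Real.enorm_eq_ofReal (hU0 0)]
    have d4 : eLpNorm (fun ω => (T / M) * ∑ i ∈ Finset.range M, R (O M ((i:ℝ) * (T / M)) ω))
        (ENNReal.ofReal (p * q)) P ≤ ENNReal.ofReal T * B := by
      have e1 : eLpNorm (fun ω => (T / M) * ∑ i ∈ Finset.range M, R (O M ((i:ℝ) * (T / M)) ω))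
          (ENNReal.ofReal (p * q)) P ≤
          (‖(T / M : ℝ)‖₊ : ℝ≥0∞) *
            eLpNorm (fun ω => ∑ i ∈ Finset.range M, R (O M ((i:ℝ) * (T / M)) ω))
              (ENNReal.ofReal (p * q)) P := by
        have := eLpNorm_const_smul_le (c := (T / M : ℝ))
          (f := fun ω => ∑ i ∈ Finset.range M, R (O M ((i:ℝ) * (T / M)) ω))
          (p := ENNReal.ofReal (p * q)) (μ := P)
        simpa [Pi.smul_def, smul_eq_mul, ENNReal.smul_def, enorm_eq_nnnorm] using this
      have e2 : eLpNorm (fun ω => ∑ i ∈ Finset.range M, R (O M ((i:ℝ) * (T / M)) ω))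
          (ENNReal.ofReal (p * q)) P ≤ (M : ℝ≥0∞) * B := by
        have hfeq : (fun ω => ∑ i ∈ Finset.range M, R (O M ((i:ℝ) * (T / M)) ω)) =
            ∑ i ∈ Finset.range M, (fun ω => R (O M ((i:ℝ) * (T / M)) ω)) := by
          funext ω; rw [Finset.sum_apply]
        rw [hfeq]
        refine le_trans (eLpNorm_sum_le
          (fun i _ => (hRm.comp (hOsm M _).measurable).aestronglyMeasurable) hepq1) ?_
        have hterm : ∀ i ∈ Finset.range M,
            eLpNorm (fun ω => R (O M ((i:ℝ) * (T / M)) ω)) (ENNReal.ofReal (p * q)) P ≤ B := by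
          intro i hi
          have hiM : i < M := Finset.mem_range.1 hi
          have hin : (i:ℝ) * (T / M) ∈ Set.Ico (0:ℝ) T := by
            constructor
            · exact mul_nonneg (Nat.cast_nonneg i) hdt0.le
            · have hlt' : (i:ℝ) < (M:ℝ) := by exact_mod_cast hiM
              calc (i:ℝ) * (T / M) < (M:ℝ) * (T / M) := mul_lt_mul_of_pos_right hlt' hdt0
                _ = T := hMdt
          refine le_trans ?_ (hBle M hM _ hin)
          refine eLpNorm_mono_real fun ω => ?_
          rw [Real.norm_of_nonneg (hR0 _)]
          linarith [hU0 (O M ((i:ℝ) * (T / M)) ω)]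
        calc (∑ i ∈ Finset.range M,
            eLpNorm (fun ω => R (O M ((i:ℝ) * (T / M)) ω)) (ENNReal.ofReal (p * q)) P)
            ≤ ∑ _i ∈ Finset.range M, B := Finset.sum_le_sum hterm
          _ = (M : ℝ≥0∞) * B := by rw [Finset.sum_const, Finset.card_range, nsmul_eq_mul]
      refine le_trans e1 (le_trans (mul_le_mul_right e2 _) (le_of_eq ?_))
      rw [← enorm_eq_nnnorm, Real.enorm_eq_ofReal hdt0.le, ← mul_assoc]
      congr 1
      rw [← ENNReal.ofReal_natCast, ← ENNReal.ofReal_mul hdt0.le]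
      congr 1
      field_simp
    refine le_trans d1 (le_trans (mul_le_mul_right
      (le_trans d2 (add_le_add d3 d4)) _) (le_of_eq ?_))
    rw [hB'def, ← enorm_eq_nnnorm, Real.enorm_eq_ofReal (Real.exp_pos _).le]
  -- U(O_t)^q
  have hUOq : eLpNorm (fun ω => U (O M t ω) ^ q) (ENNReal.ofReal p) P ≤ B ^ q := by
    have heq : (fun ω => U (O M t ω) ^ q) = fun ω => ‖U (O M t ω)‖ ^ q :=
      funext fun ω => by rw [Real.norm_of_nonneg (hU0 _)]
    rw [heq, eLpNorm_norm_rpow (fun ω => U (O M t ω)) hq, hofmul]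
    refine ENNReal.rpow_le_rpow ?_ hq.le
    refine le_trans ?_ (hBle M hM t ht)
    refine eLpNorm_mono_real fun ω => ?_
    rw [Real.norm_of_nonneg (hU0 _)]
    linarith [hR0 (O M t ω)]
  -- conclude
  calc eLpNorm (fun ω => F (Y M t ω)) (ENNReal.ofReal p) P
      ≤ (‖c‖₊ : ℝ≥0∞) *
        (eLpNorm (fun _ : Ω => (1:ℝ)) (ENNReal.ofReal p) P +
          eLpNorm (fun ω => D ω ^ q) (ENNReal.ofReal p) P +
          eLpNorm (fun ω => U (O M t ω) ^ q) (ENNReal.ofReal p) P) :=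
      le_trans step1 (le_trans step2 (mul_le_mul_right step3 _))
    _ ≤ (‖c‖₊ : ℝ≥0∞) * (1 + B' ^ q + B ^ q) :=
      mul_le_mul_right (add_le_add (add_le_add hone hDq) hUOq) _
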